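/- For every k = 0,1,2,…, let T_k : H → H be nonexpansive on a real Hilbert space H and let C ⊆ ⋂_k Fix T_k be nonempty, closed and convex. Let {β_k} ⊆ (0,∞) be summable, let {v^k} ⊆ H be bounded, and define x^{k+1} := T_k(x^k − β_k v^k) for a given x^0 ∈ H. Assume that for every i = 0,1,2,… there is x_i^∞ ∈ C such that T_k ⋯ T_i x^i converges in norm (as k → ∞) to x_i^∞. Then there is x^∞ ∈ C such that x^k → x^∞ in norm, and for all integers k ≥ i ≥ 0, ‖x^{k+1} − x^∞‖ ≤ ‖T_k ⋯ T_i x^i − x_i^∞‖ + 2 Σ_{j=i}^{∞} β_j ‖v^j‖. -/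

import Mathlib

open Metric Filter Topology

/-- `prodSeq T i x n = T_{i+n-1} ⋯ T_i x`; thus for `k ≥ i`, `prodSeq T i x (k - i)` is the
product `T_{k-1} ⋯ T_i` applied to `x`, and `prodSeq T i (x i) (k + 1 - i) = T_k ⋯ T_i x^i`. -/
def prodSeq {H : Type*} (T : ℕ → H → H) (i : ℕ) (x : H) : ℕ → H
  | 0 => x
  | n + 1 => T (i + n) (prodSeq T i x n)

/-- Superiorization, strong convergence: for the superiorized iteration
`x^{k+1} = T_k (x^k − β_k v^k)` with `{β_k}` summable and `{v^k}` bounded, if the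
unperturbed products `T_k ⋯ T_i x^i` converge in norm to points `x_i^∞ ∈ C`, then there is
`x^∞ ∈ C` with `x^k → x^∞` in norm and, for all `k ≥ i`,
`‖x^{k+1} − x^∞‖ ≤ ‖T_k ⋯ T_i x^i − x_i^∞‖ + 2 Σ_{j=i}^∞ β_j ‖v^j‖`. -/
theorem stmt13 {H : Type*} [NormedAddCommGroup H] [InnerProductSpace ℝ H] [CompleteSpace H]
    (T : ℕ → H → H) (hT : ∀ k, ∀ y z : H, ‖T k y - T k z‖ ≤ ‖y - z‖)
    (C : Set H) (hCne : C.Nonempty) (hCcl : IsClosed C) (hCcv : Convex ℝ C)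
    (hfix : ∀ k, ∀ z ∈ C, T k z = z)
    (β : ℕ → ℝ) (hβ : ∀ k, 0 < β k) (hβsum : Summable β)
    (v : ℕ → H) (hv : ∃ B : ℝ, ∀ k, ‖v k‖ ≤ B)
    (x : ℕ → H) (hx : ∀ k, x (k + 1) = T k (x k - β k • v k))
    (xinf : ℕ → H) (hxinfC : ∀ i, xinf i ∈ C)
    (hstrong : ∀ i, Tendsto (fun k => prodSeq T i (x i) (k - i)) atTop (𝓝 (xinf i))) :
    ∃ xlim ∈ C, Tendsto x atTop (𝓝 xlim) ∧
      ∀ i k : ℕ, i ≤ k →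
        ‖x (k + 1) - xlim‖ ≤
          ‖prodSeq T i (x i) (k + 1 - i) - xinf i‖ + 2 * ∑' j, β (i + j) * ‖v (i + j)‖ := by
  obtain ⟨B, hB⟩ := hv
  set s : ℕ → ℝ := fun j => β j * ‖v j‖ with hsdef
  have hs0 : ∀ j, 0 ≤ s j := fun j => mul_nonneg (hβ j).le (norm_nonneg _)
  have hssum : Summable s := by
    refine Summable.of_nonneg_of_le hs0 (fun j => ?_) (hβsum.mul_right B)
    exact mul_le_mul_of_nonneg_left (hB j) (hβ j).le
  have hssumi : ∀ i, Summable fun j => s (i + j) :=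
    fun i => hssum.comp_injective (add_right_injective i)
  set tail : ℕ → ℝ := fun i => ∑' j, s (i + j) with htaildef
  have htail0 : ∀ i, 0 ≤ tail i := fun i => tsum_nonneg fun j => hs0 _
  have htailto : Tendsto tail atTop (𝓝 0) := by
    have h := tendsto_sum_nat_add s
    have : (fun i => ∑' (k : ℕ), s (k + i)) = tail := by
      funext i; exact tsum_congr fun j => by rw [add_comm]
    rwa [this] at h
  -- tail recursion: tail i = s i + tail (i+1)
  have htailrec : ∀ i, tail i = s i + tail (i + 1) := by
    intro i
    have h := Summable.tsum_eq_zero_add (hssumi i)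
    simp only [add_zero] at h
    rw [htaildef]
    simp only
    rw [h]
    congr 1
    exact tsum_congr fun j => by ring_nf
  have htailanti : Antitone tail := by
    refine antitone_nat_of_succ_le fun i => ?_
    rw [htailrec i]
    linarith [hs0 i]
  -- key estimate by induction
  have key : ∀ i k, i ≤ k →
      ‖x (k + 1) - prodSeq T i (x i) (k + 1 - i)‖ ≤
        ∑ j ∈ Finset.range (k + 1 - i), s (i + j) := by
    intro i k hik
    induction k, hik using Nat.le_induction with
    | base =>
      have h1 : i + 1 - i = 1 := by omega
      rw [h1]
      simp only [prodSeq, Finset.sum_range_one, add_zero]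
      rw [hx i]
      calc ‖T i (x i - β i • v i) - T i (x i)‖ ≤ ‖x i - β i • v i - x i‖ := hT i _ _
        _ = β i * ‖v i‖ := by
            rw [sub_sub_cancel_left, norm_neg, norm_smul, Real.norm_eq_abs,
              abs_of_pos (hβ i)]
    | succ k hik ih =>
      have h1 : k + 1 + 1 - i = (k + 1 - i) + 1 := by omega
      have h2 : i + (k + 1 - i) = k + 1 := by omega
      rw [h1]
      simp only [prodSeq, h2]
      rw [Finset.sum_range_succ, h2, hx (k + 1)]
      calc ‖T (k+1) (x (k+1) - β (k+1) • v (k+1)) - T (k+1) (prodSeq T i (x i) (k+1-i))‖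
          ≤ ‖x (k+1) - β (k+1) • v (k+1) - prodSeq T i (x i) (k+1-i)‖ := hT _ _ _
        _ ≤ ‖x (k+1) - prodSeq T i (x i) (k+1-i)‖ + ‖β (k+1) • v (k+1)‖ := by
            rw [sub_right_comm]
            exact norm_sub_le _ _
        _ ≤ (∑ j ∈ Finset.range (k+1-i), s (i+j)) + s (k+1) := by
            refine add_le_add ih (le_of_eq ?_)
            rw [norm_smul, Real.norm_eq_abs, abs_of_pos (hβ (k+1))]
  have key' : ∀ i k, i ≤ k → ‖x (k + 1) - prodSeq T i (x i) (k + 1 - i)‖ ≤ tail i := by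
    intro i k hik
    refine (key i k hik).trans ?_
    exact Summable.sum_le_tsum _ (fun j _ => hs0 _) (hssumi i)
  -- error terms tend to 0
  have herr : ∀ i, Tendsto (fun k => ‖prodSeq T i (x i) (k + 1 - i) - xinf i‖)
      atTop (𝓝 0) := by
    intro i
    have h := (hstrong i).comp (tendsto_add_atTop_nat 1)
    have h2 := (h.sub (tendsto_const_nhds (x := xinf i))).norm
    simpa using h2
  have bound1 : ∀ i k, i ≤ k →
      ‖x (k + 1) - xinf i‖ ≤ ‖prodSeq T i (x i) (k + 1 - i) - xinf i‖ + tail i := by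
    intro i k hik
    calc ‖x (k+1) - xinf i‖
        ≤ ‖x (k+1) - prodSeq T i (x i) (k+1-i)‖ + ‖prodSeq T i (x i) (k+1-i) - xinf i‖ :=
          norm_sub_le_norm_sub_add_norm_sub _ _ _
      _ ≤ _ := by rw [add_comm]; exact add_le_add_right (key' i k hik) _
  -- xinf is Cauchy
  have hdist : ∀ i i', ‖xinf i - xinf i'‖ ≤ tail i + tail i' := by
    intro i i'
    refine ge_of_tendsto (x := atTop)
      (f := fun k => (‖prodSeq T i (x i) (k + 1 - i) - xinf i‖ + tail i) +
        (‖prodSeq T i' (x i') (k + 1 - i') - xinf i'‖ + tail i')) ?_ ?_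
    · have := (((herr i).add_const (tail i)).add ((herr i').add_const (tail i')))
      simpa using this
    · filter_upwards [eventually_ge_atTop (max i i')] with k hk
      calc ‖xinf i - xinf i'‖
          ≤ ‖xinf i - x (k+1)‖ + ‖x (k+1) - xinf i'‖ :=
            norm_sub_le_norm_sub_add_norm_sub _ _ _
        _ ≤ _ := by
            rw [norm_sub_rev (xinf i)]
            exact add_le_add (bound1 i k (le_trans (le_max_left _ _) hk))
              (bound1 i' k (le_trans (le_max_right _ _) hk))
  have hcauchy : CauchySeq xinf := by
    refine cauchySeq_of_le_tendsto_0 (fun N => 2 * tail N) (fun n m N hn hm => ?_) ?_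
    · rw [dist_eq_norm]
      calc ‖xinf n - xinf m‖ ≤ tail n + tail m := hdist n m
        _ ≤ 2 * tail N := by linarith [htailanti hn, htailanti hm]
    · simpa using htailto.const_mul 2
  obtain ⟨xlim, hxlim⟩ := cauchySeq_tendsto_of_complete hcauchy
  have hxlimC : xlim ∈ C := hCcl.mem_of_tendsto hxlim (Eventually.of_forall hxinfC)
  -- distance of xinf i to xlim
  have hxinfdist : ∀ i, ‖xinf i - xlim‖ ≤ tail i := by
    intro i
    have h1 : Tendsto (fun i' => ‖xinf i - xinf i'‖) atTop (𝓝 ‖xinf i - xlim‖) :=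
      ((tendsto_const_nhds.sub hxlim).norm)
    have h2 : Tendsto (fun i' => tail i + tail i') atTop (𝓝 (tail i + 0)) :=
      tendsto_const_nhds.add htailto
    rw [add_zero] at h2
    exact le_of_tendsto_of_tendsto' h1 h2 fun i' => hdist i i'
  refine ⟨xlim, hxlimC, ?_, ?_⟩
  · rw [← Filter.tendsto_add_atTop_iff_nat 1, Metric.tendsto_atTop]
    intro ε hε
    have h3 : (0:ℝ) < ε / 3 := by linarith
    obtain ⟨i, hi1, hi2⟩ : ∃ i, tail i < ε / 3 ∧ dist (xinf i) xlim < ε / 3 := by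
      have e2 : ∀ᶠ n in atTop, dist (xinf n) xlim < ε / 3 := by
        obtain ⟨N, hN⟩ := Metric.tendsto_atTop.1 hxlim _ h3
        exact eventually_atTop.2 ⟨N, hN⟩
      exact ((htailto.eventually (eventually_lt_nhds h3)).and e2).exists
    obtain ⟨N, hN⟩ := (Metric.tendsto_atTop.1 (herr i) (ε/3) h3)
    refine ⟨max N i, fun k hk => ?_⟩
    have hik : i ≤ k := le_trans (le_max_right _ _) hk
    have hNk : N ≤ k := le_trans (le_max_left _ _) hk
    have herrk := hN k hNk
    rw [Real.dist_eq, sub_zero] at herrk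
    rw [abs_of_nonneg (norm_nonneg _)] at herrk
    calc dist (x (k+1)) xlim ≤ dist (x (k+1)) (xinf i) + dist (xinf i) xlim := dist_triangle _ _ _
      _ < (‖prodSeq T i (x i) (k+1-i) - xinf i‖ + tail i) + ε/3 := by
          rw [dist_eq_norm]
          exact add_lt_add_of_le_of_lt (bound1 i k hik) hi2
      _ < ε/3 + ε/3 + ε/3 := by
          refine add_lt_add_left (add_lt_add herrk hi1) _
      _ = ε := by ring
  · intro i k hik
    have : (∑' j, β (i + j) * ‖v (i + j)‖) = tail i := rfl
    rw [this]
    calc ‖x (k+1) - xlim‖ ≤ ‖x (k+1) - xinf i‖ + ‖xinf i - xlim‖ :=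
        norm_sub_le_norm_sub_add_norm_sub _ _ _
      _ ≤ (‖prodSeq T i (x i) (k+1-i) - xinf i‖ + tail i) + tail i :=
        add_le_add (bound1 i k hik) (hxinfdist i)
      _ = ‖prodSeq T i (x i) (k+1-i) - xinf i‖ + 2 * tail i := by ring
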